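/- Let W₁, …, W_k ∈ ℝⁿ be linearly independent vectors, each orthogonal to span(X, Z), such that W₁ = blp(Y^{⊥zx} | W₁,…,W_k) where Y^{⊥zx} := Y − blp(Y|X,Z), W₁ ≠ 0, and W₂, …, W_k are each orthogonal to W₁. Then in the least-squares regression blp(Y | X, Z, W₁, …, W_k) = α̂Xᵀ + β̂Z + δ̂₁W₁ + δ̂₂W₂ + ⋯ + δ̂_kW_k, the coefficients δ̂₂ = ⋯ = δ̂_k = 0. -/

import Mathlib

open scoped BigOperators

/-- Weighted inner product on ℝⁿ: `(A,B) := (∑ i, wᵢ Aᵢ Bᵢ) / (∑ i, wᵢ)`. -/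
noncomputable def wip {n : ℕ} (w A B : Fin n → ℝ) : ℝ :=
  (∑ i, w i * A i * B i) / (∑ i, w i)

/-- `P` is the best linear predictor (orthogonal projection with respect to the
weighted inner product `wip w`) of `A` onto the span of the collection `C`. -/
def IsBlp {n : ℕ} (w : Fin n → ℝ) (C : Set (Fin n → ℝ)) (A P : Fin n → ℝ) : Prop :=
  P ∈ Submodule.span ℝ C ∧ ∀ v ∈ Submodule.span ℝ C, wip w (A - P) v = 0

lemma wip_add_left {n : ℕ} (w A A' B : Fin n → ℝ) :
    wip w (A + A') B = wip w A B + wip w A' B := by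
  unfold wip
  rw [← add_div]
  congr 1
  rw [← Finset.sum_add_distrib]
  exact Finset.sum_congr rfl fun i _ => by simp [Pi.add_apply]; ring

lemma wip_smul_left {n : ℕ} (w : Fin n → ℝ) (c : ℝ) (A B : Fin n → ℝ) :
    wip w (c • A) B = c * wip w A B := by
  unfold wip
  have h : (∑ i, w i * (c • A) i * B i) = c * ∑ i, w i * A i * B i := by
    rw [Finset.mul_sum]
    exact Finset.sum_congr rfl fun i _ => by simp [Pi.smul_apply]; ring
  rw [h, mul_div_assoc]

lemma wip_comm {n : ℕ} (w A B : Fin n → ℝ) : wip w A B = wip w B A := by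
  unfold wip
  congr 1
  exact Finset.sum_congr rfl fun i _ => by ring

lemma wip_sub_left {n : ℕ} (w A A' B : Fin n → ℝ) :
    wip w (A - A') B = wip w A B - wip w A' B := by
  have := wip_add_left w (A - A') A' B
  simp at this
  linarith

lemma wip_zero_left {n : ℕ} (w B : Fin n → ℝ) : wip w 0 B = 0 := by
  simpa using wip_smul_left w 0 0 B

lemma wip_self_eq_zero {n : ℕ} {w : Fin n → ℝ} (hw : ∀ i, 0 < w i) (hn : 0 < n)
    {v : Fin n → ℝ} (h : wip w v v = 0) : v = 0 := by
  haveI : Nonempty (Fin n) := Fin.pos_iff_nonempty.mp hn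
  have hpos : 0 < ∑ i, w i := Finset.sum_pos (fun i _ => hw i) Finset.univ_nonempty
  unfold wip at h
  rw [div_eq_zero_iff] at h
  rcases h with h | h
  · have h0 : ∀ i ∈ Finset.univ, w i * v i * v i = 0 :=
      (Finset.sum_eq_zero_iff_of_nonneg (fun i _ => by nlinarith [hw i, mul_self_nonneg (v i)])).mp h
    funext i
    have h1 := h0 i (Finset.mem_univ i)
    have h2 : w i * (v i * v i) = 0 := by linarith [h1, mul_assoc (w i) (v i) (v i)]
    have h3 : v i * v i = 0 := (mul_eq_zero.mp h2).resolve_left (ne_of_gt (hw i))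
    exact mul_self_eq_zero.mp h3
  · exact absurd h (ne_of_gt hpos)

/-- let `W₁, …, W_k` be linearly independent vectors, each orthogonal
to `span(X,Z)`, with `W₁ = blp(Y^{⊥zx} | W₁,…,W_k) ≠ 0` and `W₂, …, W_k` orthogonal to
`W₁`. Then in the least-squares regression of `Y` on `(X, Z, W₁, …, W_k)` the
coefficients `δ̂₂ = ⋯ = δ̂_k = 0`. -/
theorem stmt17 {n k : ℕ} (hk : 0 < k) (w : Fin n → ℝ) (hw : ∀ i, 0 < w i)
    (X : Set (Fin n → ℝ)) (hXfin : X.Finite)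
    (h1 : (fun _ => (1 : ℝ)) ∈ Submodule.span ℝ X)
    (Y Z : Fin n → ℝ) (W : Fin k → (Fin n → ℝ))
    (hWind : LinearIndependent ℝ W)
    (hWorth : ∀ i, ∀ v ∈ Submodule.span ℝ (insert Z X), wip w (W i) v = 0)
    (Pyzx : Fin n → ℝ) (hPyzx : IsBlp w (insert Z X) Y Pyzx)
    (hW1 : IsBlp w (Set.range W) (Y - Pyzx) (W ⟨0, hk⟩))
    (hW1ne : W ⟨0, hk⟩ ≠ 0)
    (hWperp : ∀ j : Fin k, j ≠ ⟨0, hk⟩ → wip w (W j) (W ⟨0, hk⟩) = 0)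
    (hind : LinearIndependent ℝ
      (fun v : (insert Z X ∪ Set.range W : Set (Fin n → ℝ)) => (v : Fin n → ℝ)))
    (P : Fin n → ℝ) (hP : IsBlp w (insert Z X ∪ Set.range W) Y P)
    (betahat : ℝ) (delta : Fin k → ℝ)
    (hdecomp : P - betahat • Z - (∑ i, delta i • W i) ∈ Submodule.span ℝ X) :
    ∀ j : Fin k, j ≠ ⟨0, hk⟩ → delta j = 0 := by
  intro j hj
  rcases Nat.eq_zero_or_pos n with hn | hn
  · subst hn
    exact absurd (funext fun i => i.elim0) hW1ne
  set i0 : Fin k := ⟨0, hk⟩ with hi0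
  -- everything in span (range W) is orthogonal to everything in span (insert Z X)
  have horth : ∀ u ∈ Submodule.span ℝ (Set.range W), ∀ v ∈ Submodule.span ℝ (insert Z X),
      wip w u v = 0 := by
    intro u hu
    induction hu using Submodule.span_induction with
    | mem x hx => rcases hx with ⟨i, rfl⟩; exact hWorth i
    | zero => exact fun v _ => wip_zero_left w v
    | add x y hx hy ihx ihy =>
        intro v hv; rw [wip_add_left, ihx v hv, ihy v hv]; ring
    | smul c x hx ih =>
        intro v hv; rw [wip_smul_left, ih v hv]; ring
  -- Q := Pyzx + W i0 is a blp of Y onto the union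
  have hQmem : Pyzx + W i0 ∈ Submodule.span ℝ (insert Z X ∪ Set.range W) :=
    Submodule.add_mem _ (Submodule.span_mono Set.subset_union_left hPyzx.1)
      (Submodule.subset_span (Set.mem_union_right _ ⟨i0, rfl⟩))
  have hQorth : ∀ v ∈ Submodule.span ℝ (insert Z X ∪ Set.range W),
      wip w (Y - (Pyzx + W i0)) v = 0 := by
    intro v hv
    rw [Submodule.span_union] at hv
    rcases Submodule.mem_sup.mp hv with ⟨a, ha, b, hb, rfl⟩
    have e : Y - (Pyzx + W i0) = (Y - Pyzx) - W i0 := by abel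
    have ha1 : wip w (Y - (Pyzx + W i0)) a = 0 := by
      rw [e, wip_sub_left, hPyzx.2 a ha,
        horth (W i0) (Submodule.subset_span ⟨i0, rfl⟩) a ha]
      ring
    have hb1 : wip w (Y - (Pyzx + W i0)) b = 0 := by
      rw [e]; exact hW1.2 b hb
    rw [wip_comm, wip_add_left, wip_comm w a, wip_comm w b, ha1, hb1]; ring
  -- uniqueness of blp : P = Pyzx + W i0
  have hPQmem : P - (Pyzx + W i0) ∈ Submodule.span ℝ (insert Z X ∪ Set.range W) :=
    Submodule.sub_mem _ hP.1 hQmem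
  have hPQ : P = Pyzx + W i0 := by
    have e : P - (Pyzx + W i0) = (Y - (Pyzx + W i0)) - (Y - P) := by abel
    have h0 : wip w (P - (Pyzx + W i0)) (P - (Pyzx + W i0)) = 0 := by
      calc wip w (P - (Pyzx + W i0)) (P - (Pyzx + W i0))
          = wip w (Y - (Pyzx + W i0)) (P - (Pyzx + W i0))
            - wip w (Y - P) (P - (Pyzx + W i0)) := by rw [← wip_sub_left, ← e]
        _ = 0 := by rw [hQorth _ hPQmem, hP.2 _ hPQmem]; ring
    have := wip_self_eq_zero hw hn h0
    exact sub_eq_zero.mp this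
  -- u := W i0 - ∑ δᵢ Wᵢ lies in both spans, hence u = 0
  set u : Fin n → ℝ := W i0 - ∑ i, delta i • W i with hu_def
  have huS : u ∈ Submodule.span ℝ (insert Z X) := by
    have e : u = (P - betahat • Z - ∑ i, delta i • W i) + betahat • Z - Pyzx := by
      rw [hu_def, hPQ]; abel
    rw [e]
    exact Submodule.sub_mem _
      (Submodule.add_mem _ (Submodule.span_mono (Set.subset_insert _ _) hdecomp)
        (Submodule.smul_mem _ _ (Submodule.subset_span (Set.mem_insert _ _))))
      hPyzx.1
  have huW : u ∈ Submodule.span ℝ (Set.range W) :=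
    Submodule.sub_mem _ (Submodule.subset_span ⟨i0, rfl⟩)
      (Submodule.sum_mem _ fun i _ =>
        Submodule.smul_mem _ _ (Submodule.subset_span ⟨i, rfl⟩))
  have hu0 : u = 0 := wip_self_eq_zero hw hn (horth u huW u huS)
  -- conclude by linear independence of the Wᵢ
  have hsum : ∑ i, (delta i - if i = i0 then 1 else 0) • W i = 0 := by
    have e : ∑ i, (delta i - if i = i0 then 1 else 0) • W i
        = (∑ i, delta i • W i) - W i0 := by
      simp only [sub_smul, ite_smul, one_smul, zero_smul, Finset.sum_sub_distrib]
      congr 1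
      simp
    rw [e, ← neg_sub (W i0), ← hu_def, hu0, neg_zero]
  have hz := Fintype.linearIndependent_iff.mp hWind _ hsum j
  simpa [hj] using hz
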